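/- arXiv:2307.16658 — 3 statements merged into one kernel-verified Lean document; each statement's English description precedes it below -/
import Mathlib

section
/- Let y ∈ (−1,0) be a quadratic irrational and let R be the Rényi map R(y) = −1/y − ⌈−1/y⌉. Then y is purely periodic under R (i.e. R^[p](y) = y for some integer p ≥ 1) if and only if its Galois conjugate y' satisfies y' < −1. -/
/-- The Rényi map `y ↦ -1/y - ⌈-1/y⌉` on irrationals in `(-1,0)`, extended by `0` elsewhere. -/
noncomputable def renyiMap (y : ℝ) : ℝ :=
  open Classical in
  if Irrational y ∧ y ∈ Set.Ioo (-1 : ℝ) 0 then -1 / y - ⌈-1 / y⌉ else 0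
namespace RenyiAux
noncomputable def rstep (z : ℝ) (t : ℤ × ℤ × ℤ) : ℤ × ℤ × ℤ :=
  (t.2.2, 2 * t.2.2 * ⌈-1 / z⌉ - t.2.1, t.2.2 * ⌈-1 / z⌉ ^ 2 - t.2.1 * ⌈-1 / z⌉ + t.1)
noncomputable def triples (y : ℝ) (t0 : ℤ × ℤ × ℤ) : ℕ → ℤ × ℤ × ℤ
  | 0 => t0
  | k + 1 => rstep (renyiMap^[k] y) (triples y t0 k)

def Good (z : ℝ) (t : ℤ × ℤ × ℤ) : Prop :=
  t.1 ≠ 0 ∧ (t.1 : ℝ) * z ^ 2 + (t.2.1 : ℝ) * z + (t.2.2 : ℝ) = 0 ∧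
    Irrational z ∧ z ∈ Set.Ioo (-1 : ℝ) 0
noncomputable def conj (z : ℝ) (t : ℤ × ℤ × ℤ) : ℝ := -(t.2.1 : ℝ) / (t.1 : ℝ) - z
lemma ne_div (z : ℝ) (hirr : Irrational z) (m k : ℤ) : z ≠ (m : ℝ) / (k : ℝ) := by
  intro h
  exact hirr ⟨(m : ℚ) / (k : ℚ), by rw [h]; push_cast; ring⟩
lemma two_le_ceil {z : ℝ} (hz : z ∈ Set.Ioo (-1 : ℝ) 0) : (2 : ℤ) ≤ ⌈-1 / z⌉ := by
  obtain ⟨h1, h2⟩ := hz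
  have h : (1 : ℝ) < -1 / z := by
    rw [lt_div_iff_of_neg (by linarith)]; linarith
  have h2 : (1 : ℤ) < ⌈-1 / z⌉ := by rw [Int.lt_ceil]; exact_mod_cast h
  omega

lemma renyiMap_eq {z : ℝ} (hirr : Irrational z) (hz : z ∈ Set.Ioo (-1 : ℝ) 0) :
    renyiMap z = -1 / z - (⌈-1 / z⌉ : ℝ) := by
  simp [renyiMap, hirr, hz]

lemma conj_irrational {z : ℝ} (hirr : Irrational z) (t : ℤ × ℤ × ℤ) :
    Irrational (conj z t) := by
  have : (-(t.2.1 : ℝ) / (t.1 : ℝ)) = (((-t.2.1 : ℚ) / (t.1 : ℚ) : ℚ) : ℝ) := by push_cast; ring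
  unfold conj
  rw [this]
  exact hirr.ratCast_sub _

/-- Main step lemma: everything that happens in one Rényi step. -/
lemma good_step {z : ℝ} {t : ℤ × ℤ × ℤ} (hg : Good z t) :
    Good (renyiMap z) (rstep z t) ∧
      conj (renyiMap z) (rstep z t) = -1 / conj z t - (⌈-1 / z⌉ : ℝ) := by
  obtain ⟨hA, hroot, hirr, hz⟩ := hg
  obtain ⟨hz1, hz2⟩ := hz
  set A := t.1 with hAdef
  set B := t.2.1
  set C := t.2.2
  set n := ⌈-1 / z⌉ with hn
  have hz0 : z ≠ 0 := by intro h; exact (hirr.ne_int 0) (by simp [h])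
  have hAr : (A : ℝ) ≠ 0 := Int.cast_ne_zero.mpr hA
  have hc : conj z t = -(B : ℝ) / A - z := rfl
  have hc0 : conj z t ≠ 0 := by
    rw [hc]; intro h
    apply ne_div z hirr (-B) A
    push_cast
    linarith
  have hCval : (C : ℝ) = (A : ℝ) * z * conj z t := by
    rw [hc]
    have he : (A : ℝ) * z * (-(B : ℝ) / (A : ℝ) - z) = -(B : ℝ) * z - (A : ℝ) * z ^ 2 := by
      field_simp
    rw [he]; linarith [hroot]
  have hCr : (C : ℝ) ≠ 0 := by
    rw [hCval]; exact mul_ne_zero (mul_ne_zero hAr hz0) hc0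
  have hC : C ≠ 0 := fun h => hCr (by rw [h]; simp)
  have hn2 : (2 : ℤ) ≤ n := two_le_ceil ⟨hz1, hz2⟩
  have hw : renyiMap z = -1 / z - (n : ℝ) := renyiMap_eq hirr ⟨hz1, hz2⟩
  set w := renyiMap z with hwdef
  have hinvirr : Irrational (-1 / z) := by
    have := (hirr.inv).neg
    simpa [neg_div, one_div] using this
  have hwirr : Irrational w := by rw [hw]; exact hinvirr.sub_intCast n
  have hwlt : w < 0 := by
    rw [hw, sub_neg]
    exact lt_of_le_of_ne (Int.le_ceil _) (hinvirr.ne_int n)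
  have hwgt : -1 < w := by
    rw [hw]
    have := Int.ceil_lt_add_one (-1 / z)
    linarith
  have hzw : z = -1 / ((n : ℝ) + w) := by
    rw [hw]
    have : (n : ℝ) + (-1 / z - n) = -1 / z := by ring
    rw [this]
    field_simp
  have hnw : (n : ℝ) + w ≠ 0 := by
    rw [hw]; intro h
    apply hz0
    have : (-1 : ℝ) / z = 0 := by linarith
    field_simp at this
    simp at this
  have hrootw : (C : ℝ) * w ^ 2 + ((2 * C * n - B : ℤ) : ℝ) * w + ((C * n ^ 2 - B * n + A : ℤ) : ℝ) = 0 := by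
    have key : (C : ℝ) * w ^ 2 + ((2 * C * n - B : ℤ) : ℝ) * w + ((C * n ^ 2 - B * n + A : ℤ) : ℝ)
        = ((A : ℝ) * z ^ 2 + B * z + C) / z ^ 2 := by
      rw [hw]; push_cast; field_simp; ring
    rw [key, hroot, zero_div]
  refine ⟨⟨hC, by exact_mod_cast hrootw, hwirr, hwgt, hwlt⟩, ?_⟩
  have hconjw : conj w (rstep z t) = (B : ℝ) / C - n + 1 / z := by
    show -((2 * C * n - B : ℤ) : ℝ) / (C : ℝ) - w = _
    rw [hw]; push_cast; field_simp; ring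
  rw [hconjw]
  have hconj2 : conj z t = (C : ℝ) / ((A : ℝ) * z) := by
    rw [hCval]; field_simp
  have hmul : ((B : ℝ) / C + 1 / z) * conj z t = -1 := by
    rw [hconj2]
    field_simp
    linear_combination hroot
  have hkey : -1 / conj z t = (B : ℝ) / C + 1 / z := by
    rw [div_eq_iff hc0]; linarith [hmul]
  linarith [hkey]

def disc (t : ℤ × ℤ × ℤ) : ℤ := t.2.1 ^ 2 - 4 * t.1 * t.2.2

lemma disc_rstep (z : ℝ) (t : ℤ × ℤ × ℤ) : disc (rstep z t) = disc t := by
  simp only [disc, rstep]; ring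

def Red (z : ℝ) (t : ℤ × ℤ × ℤ) : Prop := Good z t ∧ 0 < t.1 ∧ conj z t < -1

lemma red_step {z : ℝ} {t : ℤ × ℤ × ℤ} (hr : Red z t) : Red (renyiMap z) (rstep z t) := by
  obtain ⟨hg, hA, hcm⟩ := hr
  obtain ⟨hgood, hconj⟩ := good_step hg
  obtain ⟨hA0, hroot, hirr, hz1, hz2⟩ := hg
  have hAr : (0 : ℝ) < (t.1 : ℝ) := by exact_mod_cast hA
  refine ⟨hgood, ?_, ?_⟩
  · -- new leading coefficient t.2.2 is positive
    have hc : conj z t = -(t.2.1 : ℝ) / (t.1 : ℝ) - z := rfl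
    have hCval : (t.2.2 : ℝ) = (t.1 : ℝ) * z * conj z t := by
      rw [hc]
      have he : (t.1 : ℝ) * z * (-(t.2.1 : ℝ) / (t.1 : ℝ) - z)
          = -(t.2.1 : ℝ) * z - (t.1 : ℝ) * z ^ 2 := by
        field_simp
      rw [he]; linarith [hroot]
    have : (0 : ℝ) < (t.2.2 : ℝ) := by
      rw [hCval]
      have hp : (0:ℝ) < (t.1 : ℝ) * ((-z) * (-conj z t)) :=
        mul_pos hAr (mul_pos (by linarith) (by linarith))
      nlinarith [hp]
    show 0 < (rstep z t).1
    simp only [rstep]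
    exact_mod_cast this
  · rw [hconj]
    have hn2 : (2 : ℤ) ≤ ⌈-1 / z⌉ := two_le_ceil ⟨hz1, hz2⟩
    have hn2r : (2 : ℝ) ≤ (⌈-1 / z⌉ : ℝ) := by exact_mod_cast hn2
    have h1 : -1 / conj z t < 1 := by
      rw [div_lt_one_iff]
      right; right
      constructor <;> linarith
    linarith

lemma red_bounds {z : ℝ} {t : ℤ × ℤ × ℤ} (hr : Red z t) :
    1 ≤ t.1 ∧ 1 ≤ t.2.2 ∧ t.1 + t.2.2 + 1 ≤ t.2.1 := by
  obtain ⟨⟨hA0, hroot, hirr, hz1, hz2⟩, hA, hcm⟩ := hr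
  have hAr : (0 : ℝ) < (t.1 : ℝ) := by exact_mod_cast hA
  have hc : conj z t = -(t.2.1 : ℝ) / (t.1 : ℝ) - z := rfl
  have hsum : (t.1 : ℝ) * (z + conj z t) = -(t.2.1 : ℝ) := by
    rw [hc]; field_simp; ring
  have hCval : (t.2.2 : ℝ) = (t.1 : ℝ) * z * conj z t := by
    rw [hc]
    have he : (t.1 : ℝ) * z * (-(t.2.1 : ℝ) / (t.1 : ℝ) - z)
        = -(t.2.1 : ℝ) * z - (t.1 : ℝ) * z ^ 2 := by
      field_simp
    rw [he]; linarith [hroot]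
  have hCpos : (0 : ℝ) < (t.2.2 : ℝ) := by
    rw [hCval]
    have hp : (0:ℝ) < (t.1 : ℝ) * ((-z) * (-conj z t)) :=
      mul_pos hAr (mul_pos (by linarith) (by linarith))
    nlinarith [hp]
  have hQ : (t.1 : ℝ) - t.2.1 + t.2.2 < 0 := by
    have : (t.1 : ℝ) - t.2.1 + t.2.2
        = (t.1 : ℝ) * (-1 - z) * (-1 - conj z t) := by
      rw [hCval]; nlinarith [hsum]
    rw [this]
    have h1 : (-1 : ℝ) - z < 0 := by linarith
    have h2 : (0 : ℝ) < -1 - conj z t := by linarith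
    exact mul_neg_of_neg_of_pos (mul_neg_of_pos_of_neg hAr h1) h2
  have hC1 : 1 ≤ t.2.2 := by
    have : (0 : ℤ) < t.2.2 := by exact_mod_cast hCpos
    omega
  refine ⟨hA, hC1, ?_⟩
  have : (t.1 : ℤ) - t.2.1 + t.2.2 < 0 := by exact_mod_cast hQ
  omega

lemma conj_unique {z : ℝ} (hirr : Irrational z) {t s : ℤ × ℤ × ℤ}
    (ht1 : t.1 ≠ 0) (hs1 : s.1 ≠ 0)
    (htr : (t.1 : ℝ) * z ^ 2 + (t.2.1 : ℝ) * z + (t.2.2 : ℝ) = 0)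
    (hsr : (s.1 : ℝ) * z ^ 2 + (s.2.1 : ℝ) * z + (s.2.2 : ℝ) = 0) :
    conj z t = conj z s := by
  have hlin : ((s.1 * t.2.1 - t.1 * s.2.1 : ℤ) : ℝ) * z + ((s.1 * t.2.2 - t.1 * s.2.2 : ℤ) : ℝ) = 0 := by
    push_cast
    linear_combination (s.1 : ℝ) * htr - (t.1 : ℝ) * hsr
  have hcoef : s.1 * t.2.1 - t.1 * s.2.1 = 0 := by
    by_contra h
    have hco : ((s.1 * t.2.1 - t.1 * s.2.1 : ℤ) : ℝ) ≠ 0 := Int.cast_ne_zero.mpr h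
    apply ne_div z hirr (-(s.1 * t.2.2 - t.1 * s.2.2)) (s.1 * t.2.1 - t.1 * s.2.1)
    rw [eq_div_iff hco]
    push_cast
    push_cast at hlin
    linarith
  have htr' : (t.1 : ℝ) ≠ 0 := Int.cast_ne_zero.mpr ht1
  have hsr' : (s.1 : ℝ) ≠ 0 := Int.cast_ne_zero.mpr hs1
  have h2 : ((s.1 : ℝ) * t.2.1) = (t.1 : ℝ) * s.2.1 := by
    have h3 : ((s.1 * t.2.1 : ℤ) : ℝ) = ((t.1 * s.2.1 : ℤ) : ℝ) :=
      congrArg _ (by omega : s.1 * t.2.1 = t.1 * s.2.1)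
    push_cast at h3
    linarith
  unfold conj
  have h4 : -(t.2.1 : ℝ) / (t.1 : ℝ) = -(s.2.1 : ℝ) / (s.1 : ℝ) := by
    rw [div_eq_div_iff htr' hsr']
    nlinarith [h2]
  rw [h4]

lemma renyi_inj {z1 z2 : ℝ} {t1 t2 : ℤ × ℤ × ℤ} (h1 : Red z1 t1) (h2 : Red z2 t2)
    (heq : renyiMap z1 = renyiMap z2) : z1 = z2 := by
  obtain ⟨hg1, hconj1⟩ := good_step h1.1
  obtain ⟨hg2, hconj2⟩ := good_step h2.1
  obtain ⟨hA1, hroot1, hirr1, hm1⟩ := h1.1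
  obtain ⟨hA2, hroot2, hirr2, hm2⟩ := h2.1
  have hcu : conj (renyiMap z1) (rstep z1 t1) = conj (renyiMap z1) (rstep z2 t2) := by
    apply conj_unique hg1.2.2.1 hg1.1 hg2.1 hg1.2.1
    rw [heq]
    exact hg2.2.1
  rw [hconj1] at hcu
  rw [heq, hconj2] at hcu
  -- -1/c1 - n1 = -1/c2 - n2 with -1/ci ∈ (0,1)
  have hc1 := h1.2.2
  have hc2 := h2.2.2
  have hb1 : 0 < -1 / conj z1 t1 ∧ -1 / conj z1 t1 < 1 := by
    constructor
    · apply div_pos_of_neg_of_neg <;> linarith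
    · rw [div_lt_one_iff]; right; right; constructor <;> linarith
  have hb2 : 0 < -1 / conj z2 t2 ∧ -1 / conj z2 t2 < 1 := by
    constructor
    · apply div_pos_of_neg_of_neg <;> linarith
    · rw [div_lt_one_iff]; right; right; constructor <;> linarith
  have hnn : ⌈-1 / z1⌉ = ⌈-1 / z2⌉ := by
    have h : ((⌈-1 / z1⌉ - ⌈-1 / z2⌉ : ℤ) : ℝ) = -1 / conj z1 t1 - (-1 / conj z2 t2) := by
      push_cast; linarith [hcu]
    have habs : |((⌈-1 / z1⌉ - ⌈-1 / z2⌉ : ℤ) : ℝ)| < 1 := by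
      rw [abs_lt]; constructor <;> (rw [h]; linarith [hb1.1, hb1.2, hb2.1, hb2.2])
    have : |(⌈-1 / z1⌉ - ⌈-1 / z2⌉ : ℤ)| < 1 := by exact_mod_cast (by rwa [← Int.cast_abs] at habs : ((|⌈-1 / z1⌉ - ⌈-1 / z2⌉| : ℤ) : ℝ) < 1)
    rw [abs_lt] at this
    omega
  have hw1 : renyiMap z1 = -1 / z1 - (⌈-1 / z1⌉ : ℝ) := renyiMap_eq hirr1 hm1
  have hw2 : renyiMap z2 = -1 / z2 - (⌈-1 / z2⌉ : ℝ) := renyiMap_eq hirr2 hm2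
  have hz10 : z1 ≠ 0 := by intro h; exact (hirr1.ne_int 0) (by simp [h])
  have hz20 : z2 ≠ 0 := by intro h; exact (hirr2.ne_int 0) (by simp [h])
  have : -1 / z1 = -1 / z2 := by
    rw [hw1, hw2, hnn] at heq
    push_cast at heq ⊢
    linarith [heq]
  field_simp at this
  linarith [this]


lemma good_inv {y : ℝ} {t0 : ℤ × ℤ × ℤ} (hg : Good y t0) :
    ∀ k, Good (renyiMap^[k] y) (triples y t0 k) := by
  intro k
  induction k with
  | zero => exact hg
  | succ k ih =>
    rw [Function.iterate_succ_apply']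
    exact (good_step ih).1

lemma red_inv {y : ℝ} {t0 : ℤ × ℤ × ℤ} (hr : Red y t0) :
    ∀ k, Red (renyiMap^[k] y) (triples y t0 k) := by
  intro k
  induction k with
  | zero => exact hr
  | succ k ih =>
    rw [Function.iterate_succ_apply']
    exact red_step ih

lemma periodic_of_red {y : ℝ} {t0 : ℤ × ℤ × ℤ} (hr : Red y t0) :
    ∃ p : ℕ, 1 ≤ p ∧ renyiMap^[p] y = y := by
  have hinv := red_inv hr
  have hdisc : ∀ k, disc (triples y t0 k) = disc t0 := by
    intro k
    induction k with
    | zero => rfl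
    | succ k ih => rw [show triples y t0 (k+1) = rstep (renyiMap^[k] y) (triples y t0 k) from rfl, disc_rstep]; exact ih
  set D := disc t0 with hD
  have hmem : ∀ k, triples y t0 k ∈ Finset.Icc ((1:ℤ),(1:ℤ),(1:ℤ)) (D, D, D) := by
    intro k
    obtain ⟨h1, h2, h3⟩ := red_bounds (hinv k)
    have hd : (triples y t0 k).2.1 ^ 2 - 4 * (triples y t0 k).1 * (triples y t0 k).2.2 = D := hdisc k
    set T := triples y t0 k
    have hB : T.2.1 ≤ D := by
      nlinarith [sq_nonneg (T.1 - T.2.2), mul_nonneg (by omega : (0:ℤ) ≤ T.2.1 - 1 - T.1 - T.2.2) (by omega : (0:ℤ) ≤ T.2.1 - 1 + T.1 + T.2.2)]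
    rw [Finset.mem_Icc]
    simp only [Prod.le_def]
    refine ⟨⟨h1, by omega, h2⟩, by omega, by omega, by omega⟩
  obtain ⟨i, hi, j, hj, hne, heqT⟩ := Finset.exists_ne_map_eq_of_card_lt_of_maps_to
      (s := Finset.range ((Finset.Icc ((1:ℤ),(1:ℤ),(1:ℤ)) (D, D, D)).card + 1))
      (t := Finset.Icc ((1:ℤ),(1:ℤ),(1:ℤ)) (D, D, D))
      (by simp) (fun k _ => hmem k)
  -- triple equality at two indices forces point equality
  have hpt : ∀ i j : ℕ, triples y t0 i = triples y t0 j →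
      renyiMap^[i] y = renyiMap^[j] y := by
    intro i j hT
    obtain ⟨⟨hA0i, hrooti, hirri, hz1i, hz2i⟩, hAposi, hci⟩ := hinv i
    obtain ⟨⟨hA0j, hrootj, hirrj, hz1j, hz2j⟩, hAposj, hcj⟩ := hinv j
    rw [hT] at hrooti hci
    set T := triples y t0 j with hTj
    set zi := renyiMap^[i] y
    set zj := renyiMap^[j] y
    have hAr : (T.1 : ℝ) ≠ 0 := Int.cast_ne_zero.mpr hA0j
    have hfac : (T.1 : ℝ) * (zi - zj) * ((T.1 : ℝ) * (zi + zj) + (T.2.1 : ℝ)) = 0 := by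
      linear_combination (T.1 : ℝ) * hrooti - (T.1 : ℝ) * hrootj
    rcases mul_eq_zero.mp hfac with h | h
    · rcases mul_eq_zero.mp h with h' | h'
      · exact absurd h' hAr
      · linarith [h']
    · exfalso
      have : zj = conj zi T := by
        unfold conj
        field_simp
        linarith [h]
      rw [← this] at hci
      linarith
  have main : ∀ i j : ℕ, i < j → renyiMap^[i] y = renyiMap^[j] y →
      ∃ p, 1 ≤ p ∧ renyiMap^[p] y = y := by
    intro i j hlt hzeq
    set p := j - i with hp
    have hp1 : 1 ≤ p := by omega
    have hstep : ∀ m, renyiMap^[m+1] y = renyiMap^[m+1+p] y →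
        renyiMap^[m] y = renyiMap^[m+p] y := by
      intro m h
      apply renyi_inj (hinv m) (hinv (m+p))
      rw [← Function.iterate_succ_apply' renyiMap m y,
          ← Function.iterate_succ_apply' renyiMap (m+p) y]
      rw [show m + 1 + p = m + p + 1 from by omega] at h
      exact h
    have hdown : ∀ k, k ≤ i → renyiMap^[i - k] y = renyiMap^[i - k + p] y := by
      intro k
      induction k with
      | zero => intro _; rw [Nat.sub_zero, show i + p = j from by omega]; exact hzeq
      | succ k ih =>
        intro hk
        have h1 := ih (by omega)
        apply hstep
        rw [show i - (k+1) + 1 = i - k from by omega]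
        exact h1
    have hfin := hdown i le_rfl
    rw [Nat.sub_self] at hfin
    refine ⟨p, hp1, ?_⟩
    rw [show (p : ℕ) = 0 + p from by omega, ← hfin]
    simp
  rcases hne.lt_or_gt with hlt | hlt
  · exact main i j hlt (hpt i j heqT)
  · exact main j i hlt (hpt j i heqT.symm)


lemma conj_lt_of_periodic {y : ℝ} {t0 : ℤ × ℤ × ℤ} (hg : Good y t0) {p : ℕ}
    (hp : 1 ≤ p) (hper : renyiMap^[p] y = y) : conj y t0 < -1 := by
  have hinv := good_inv hg
  set z : ℕ → ℝ := fun k => renyiMap^[k] y with hzdef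
  set c : ℕ → ℝ := fun k => conj (z k) (triples y t0 k) with hcdef
  have hz0y : z 0 = y := rfl
  have hzp : z p = y := hper
  have hcrel : ∀ k, c (k+1) = -1 / c k - (⌈-1 / z k⌉ : ℝ) := by
    intro k
    have h := (good_step (hinv k)).2
    show conj (z (k+1)) (triples y t0 (k+1)) = _
    have hz1 : z (k+1) = renyiMap (z k) := Function.iterate_succ_apply' renyiMap k y
    rw [hz1]
    exact h
  have hrootp : ((triples y t0 p).1 : ℝ) * y ^ 2 + ((triples y t0 p).2.1 : ℝ) * y + ((triples y t0 p).2.2 : ℝ) = 0 := by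
    have := (hinv p).2.1
    rwa [hper] at this
  have hcp : c p = c 0 := by
    show conj (renyiMap^[p] y) (triples y t0 p) = conj (renyiMap^[0] y) (triples y t0 0)
    rw [hper]
    exact conj_unique hg.2.2.1 (hinv p).1 hg.1 hrootp hg.2.1
  by_contra hcon
  push_neg at hcon
  have hc0irr : Irrational (c 0) := conj_irrational hg.2.2.1 t0
  have hc0ne : c 0 ≠ -1 := by
    intro h
    exact (hc0irr.ne_int (-1)) (by rw [h]; simp)
  have hcon' : (-1 : ℝ) ≤ c 0 := hcon
  have hc0 : -1 < c 0 := lt_of_le_of_ne hcon' (Ne.symm hc0ne)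
  have hckirr : ∀ k, Irrational (c k) := fun k => conj_irrational (hinv k).2.2.1 _
  have hck0 : ∀ k, c k ≠ 0 := fun k => by
    intro h; exact ((hckirr k).ne_int 0) (by rw [h]; simp)
  have hback : ∀ k, c k = -1 / ((⌈-1 / z k⌉ : ℝ) + c (k+1)) := by
    intro k
    have h1 := hcrel k
    have h2 : (⌈-1 / z k⌉ : ℝ) + c (k+1) = -1 / c k := by rw [h1]; ring
    rw [h2]
    field_simp
  have hn2 : ∀ k, (2 : ℝ) ≤ (⌈-1 / z k⌉ : ℝ) := by
    intro k
    exact_mod_cast two_le_ceil (hinv k).2.2.2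
  have hdn : ∀ k, k ≤ p → -1 < c (p - k) := by
    intro k
    induction k with
    | zero => intro _; rw [Nat.sub_zero, hcp]; exact hc0
    | succ k ih =>
      intro hk
      have hik := ih (by omega)
      have hm : p - (k+1) + 1 = p - k := by omega
      have hb := hback (p - (k+1))
      rw [hm] at hb
      have hden : 1 < (⌈-1 / z (p - (k+1))⌉ : ℝ) + c (p - k) := by
        linarith [hn2 (p - (k+1))]
      set X := (⌈-1 / z (p - (k+1))⌉ : ℝ) + c (p - k) with hXdef
      have h1 : 1 / X < 1 := by rw [div_lt_one (by linarith)]; linarith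
      have h0 : 0 < 1 / X := by positivity
      rw [hb, show -1 / X = -(1 / X) from by ring]
      linarith
  have hne : ∀ k, z k ≠ c k := by
    intro k h
    obtain ⟨hA0, hroot, hirr, hzm⟩ := hinv k
    set T := triples y t0 k
    have hAr : (T.1 : ℝ) ≠ 0 := Int.cast_ne_zero.mpr hA0
    apply ne_div (z k) hirr (-T.2.1) (2 * T.1)
    have hck : c k = -(T.2.1 : ℝ) / (T.1 : ℝ) - z k := rfl
    rw [← h] at hck
    push_cast
    have h2A : (2 : ℝ) * (T.1 : ℝ) ≠ 0 := mul_ne_zero two_ne_zero hAr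
    rw [eq_div_iff h2A]
    field_simp at hck
    linear_combination hck
  have hzrel : ∀ k, z k = -1 / ((⌈-1 / z k⌉ : ℝ) + z (k+1)) := by
    intro k
    obtain ⟨hA0, hroot, hirr, hzm⟩ := hinv k
    have hz1 : z (k+1) = renyiMap (z k) := Function.iterate_succ_apply' renyiMap k y
    have hw : renyiMap (z k) = -1 / z k - (⌈-1 / z k⌉ : ℝ) := renyiMap_eq hirr hzm
    have hz0 : z k ≠ 0 := by intro h; exact (hirr.ne_int 0) (by exact_mod_cast h)
    rw [hz1, hw, show (⌈-1 / z k⌉ : ℝ) + (-1 / z k - (⌈-1 / z k⌉ : ℝ)) = -1 / z k from by ring]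
    field_simp
  have hcontr : ∀ k, k < p → |z k - c k| < |z (k+1) - c (k+1)| := by
    intro k hk
    have hzk1 : -1 < z (k+1) := (hinv (k+1)).2.2.2.1
    have hck1 : -1 < c (k+1) := by
      have := hdn (p - (k+1)) (by omega)
      rwa [show p - (p - (k+1)) = k + 1 from by omega] at this
    have hn := hn2 k
    set N := (⌈-1 / z k⌉ : ℝ) with hN
    set u := N + z (k+1) with hu
    set v := N + c (k+1) with hv
    have hu1 : 1 < u := by rw [hu]; linarith
    have hv1 : 1 < v := by rw [hv]; linarith
    have hu0 : u ≠ 0 := by linarith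
    have hv0 : v ≠ 0 := by linarith
    have e3 : u - v = z (k+1) - c (k+1) := by rw [hu, hv]; ring
    have e1 : z k = -1 / u := by rw [hu, hN]; exact hzrel k
    have e2 : c k = -1 / v := by rw [hv, hN]; exact hback k
    have hid : z k - c k = (u - v) / (u * v) := by
      rw [e1, e2]
      field_simp
      ring
    have habs : |u * v| = u * v := abs_of_pos (by nlinarith)
    rw [hid, abs_div, habs, e3]
    have hpos : 0 < |z (k+1) - c (k+1)| := abs_pos.mpr (sub_ne_zero.mpr (hne (k+1)))
    rw [div_lt_iff₀ (by nlinarith)]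
    nlinarith [mul_lt_mul_of_pos_left (show (1:ℝ) < u * v by nlinarith) hpos]
  have hchain : ∀ m, m ≤ p → m ≠ 0 → |z 0 - c 0| < |z m - c m| := by
    intro m
    induction m with
    | zero => intro _ h; exact absurd rfl h
    | succ m ih =>
      intro hm _
      by_cases h0 : m = 0
      · subst h0; exact hcontr 0 (by omega)
      · exact lt_trans (ih (by omega) h0) (hcontr m (by omega))
  have hfin := hchain p le_rfl (by omega)
  rw [show z p = z 0 from hzp.trans hz0y.symm, hcp] at hfin
  exact lt_irrefl _ hfin

end RenyiAux

/-- A quadratic irrational `y ∈ (-1,0)` is purely periodic under the Rényi map iff its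
Galois conjugate `y' = -b/a - y` satisfies `y' < -1`. -/
theorem renyi_purely_periodic_iff
    (y : ℝ) (hmem : y ∈ Set.Ioo (-1 : ℝ) 0) (hirr : Irrational y)
    (a b c : ℤ) (ha : a ≠ 0)
    (hroot : (a : ℝ) * y ^ 2 + (b : ℝ) * y + (c : ℝ) = 0) :
    (∃ p : ℕ, 1 ≤ p ∧ renyiMap^[p] y = y) ↔ -(b : ℝ) / (a : ℝ) - y < -1 := by
  constructor
  · rintro ⟨p, hp, hper⟩
    have hg : RenyiAux.Good y (a, b, c) := ⟨ha, hroot, hirr, hmem⟩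
    exact RenyiAux.conj_lt_of_periodic hg hp hper
  · intro hconj
    by_cases hapos : 0 < a
    · exact RenyiAux.periodic_of_red (t0 := (a, b, c)) ⟨⟨ha, hroot, hirr, hmem⟩, hapos, hconj⟩
    · have hg : RenyiAux.Good y (-a, -b, -c) :=
        ⟨by omega, by push_cast; linear_combination -hroot, hirr, hmem⟩
      have hc : RenyiAux.conj y (-a, -b, -c) = -(b : ℝ) / (a : ℝ) - y := by
        show -((-b : ℤ) : ℝ) / ((-a : ℤ) : ℝ) - y = _
        push_cast
        ring
      exact RenyiAux.periodic_of_red (t0 := (-a, -b, -c)) ⟨hg, by omega, by rw [hc]; exact hconj⟩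
end

section
/- Let α be a type and let A be a set of nonempty lists over α that is a code: any two finite factorizations of the same list into elements of A coincide. Let a, b : ℕ → A be sequences of elements of A such that their infinite concatenations define the same infinite word, i.e. for all m, n ∈ ℕ one of the lists a 0 ++ ⋯ ++ a m and b 0 ++ ⋯ ++ b n is a prefix of the other. If a is purely periodic, i.e. there exists an integer p ≥ 1 with a (t+p) = a t for all t, then a t = b t for every t ∈ ℕ. -/
private def lpow {α : Type*} (l : List α) (k : ℕ) : List α := (List.replicate k l).flatten

private theorem lpow_zero {α : Type*} (l : List α) : lpow l 0 = [] := rfl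

private theorem lpow_succ {α : Type*} (l : List α) (k : ℕ) : lpow l (k+1) = l ++ lpow l k := by
  simp [lpow, List.replicate_succ]

private theorem lpow_succ' {α : Type*} (l : List α) (k : ℕ) : lpow l (k+1) = lpow l k ++ l := by
  rw [lpow, List.replicate_succ', List.flatten_append]; simp [lpow]

private theorem lpow_add {α : Type*} (l : List α) (m n : ℕ) :
    lpow l (m+n) = lpow l m ++ lpow l n := by
  rw [lpow, List.replicate_add, List.flatten_append]; rfl

private theorem lpow_one {α : Type*} (l : List α) : lpow l 1 = l := by simp [lpow]

private theorem length_lpow {α : Type*} (l : List α) (k : ℕ) :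
    (lpow l k).length = k * l.length := by
  induction k with
  | zero => simp [lpow_zero]
  | succ k ih => rw [lpow_succ, List.length_append, ih, Nat.succ_mul]; omega

private theorem lpow_mul {α : Type*} (l : List α) (m n : ℕ) :
    lpow l (m*n) = lpow (lpow l m) n := by
  induction n with
  | zero => simp [lpow_zero]
  | succ n ih => rw [Nat.mul_succ, lpow_add, ih, lpow_succ']

private theorem lpow_shift {α : Type*} (x y : List α) (m : ℕ) :
    x ++ lpow (y ++ x) m = lpow (x ++ y) m ++ x := by
  induction m with
  | zero => simp [lpow_zero]
  | succ m ih =>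
    rw [lpow_succ, lpow_succ]
    calc x ++ ((y ++ x) ++ lpow (y ++ x) m) = (x ++ y) ++ (x ++ lpow (y ++ x) m) := by simp
    _ = (x ++ y) ++ (lpow (x ++ y) m ++ x) := by rw [ih]
    _ = ((x ++ y) ++ lpow (x ++ y) m) ++ x := by simp

private theorem comm_append_aux {α : Type*} :
    ∀ (N : ℕ) (x y : List α), x.length + y.length ≤ N → x ++ y = y ++ x →
    ∃ (z : List α) (m n : ℕ), x = lpow z m ∧ y = lpow z n := by
  intro N
  induction N with
  | zero =>
    intro x y hl _
    have hx : x = [] := List.eq_nil_of_length_eq_zero (by omega)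
    have hy : y = [] := List.eq_nil_of_length_eq_zero (by omega)
    exact ⟨[], 0, 0, by simp [hx, lpow_zero], by simp [hy, lpow_zero]⟩
  | succ N ih =>
    intro x y hl h
    by_cases hx : x = []
    · exact ⟨y, 0, 1, by simp [hx, lpow_zero], by simp [lpow_one]⟩
    by_cases hy : y = []
    · exact ⟨x, 1, 0, by simp [lpow_one], by simp [hy, lpow_zero]⟩
    rcases le_total x.length y.length with hle | hle
    · have hxy : x <+: y := by
        refine List.prefix_of_prefix_length_le ?_ (List.prefix_append y x) hle
        rw [← h]; exact List.prefix_append x y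
      obtain ⟨w, hw⟩ := hxy
      have h2 : x ++ w = w ++ x := by
        have : x ++ (x ++ w) = (x ++ w) ++ x := by rw [hw, h]
        have := this.symm
        rw [List.append_assoc] at this
        exact (List.append_cancel_left this).symm
      have hxlen : 1 ≤ x.length := by
        rcases Nat.eq_zero_or_pos x.length with h0 | h0
        · exact absurd (List.eq_nil_of_length_eq_zero h0) hx
        · exact h0
      have hwl : x.length + w.length ≤ N := by
        have : x.length + w.length = y.length := by
          rw [← hw]; simp
        omega
      obtain ⟨z, m, n, hzx, hzw⟩ := ih x w hwl h2
      exact ⟨z, m, m + n, hzx, by rw [← hw, hzx, hzw, lpow_add]⟩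
    · have hxy : y <+: x := by
        refine List.prefix_of_prefix_length_le ?_ (List.prefix_append x y) hle
        rw [h]; exact List.prefix_append y x
      obtain ⟨w, hw⟩ := hxy
      have h2 : y ++ w = w ++ y := by
        have : y ++ (y ++ w) = (y ++ w) ++ y := by rw [hw, ← h]
        have := this.symm
        rw [List.append_assoc] at this
        exact (List.append_cancel_left this).symm
      have hylen : 1 ≤ y.length := by
        rcases Nat.eq_zero_or_pos y.length with h0 | h0
        · exact absurd (List.eq_nil_of_length_eq_zero h0) hy
        · exact h0
      have hwl : y.length + w.length ≤ N := by
        have : y.length + w.length = x.length := by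
          rw [← hw]; simp
        omega
      obtain ⟨z, m, n, hzy, hzw⟩ := ih y w hwl h2
      exact ⟨z, m + n, m, by rw [← hw, hzy, hzw, lpow_add], hzy⟩

private theorem comm_append {α : Type*} (x y : List α) (h : x ++ y = y ++ x) :
    ∃ (z : List α) (m n : ℕ), x = lpow z m ∧ y = lpow z n :=
  comm_append_aux (x.length + y.length) x y le_rfl h

private theorem flatten_replicate_flatten {α : Type*} (l : List (List α)) (n : ℕ) :
    ((List.replicate n l).flatten).flatten = lpow l.flatten n := by
  induction n with
  | zero => rfl
  | succ n ih => rw [List.replicate_succ, List.flatten_cons, List.flatten_append, ih, lpow_succ]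

example : True := trivial

/-- If `A` is a code of nonempty words and two `A`-factorizations `a`, `b` define the same
infinite word (every pair of finite partial concatenations is prefix-comparable), and `a`
is purely periodic, then `a = b`. -/
theorem code_purely_periodic_unique_factorization {α : Type*} (A : Set (List α))
    (hne : ∀ w ∈ A, w ≠ [])
    (hcode : ∀ us vs : List (List α), (∀ u ∈ us, u ∈ A) → (∀ v ∈ vs, v ∈ A) →
      us.flatten = vs.flatten → us = vs)
    (a b : ℕ → List α) (ha : ∀ t, a t ∈ A) (hb : ∀ t, b t ∈ A)
    (hagree : ∀ m n : ℕ,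
      ((List.range (m + 1)).map a).flatten <+: ((List.range (n + 1)).map b).flatten ∨
      ((List.range (n + 1)).map b).flatten <+: ((List.range (m + 1)).map a).flatten)
    (p : ℕ) (hp : 1 ≤ p) (hper : ∀ t, a (t + p) = a t) :
    ∀ t, a t = b t := by
  classical
  intro t
  -- iterated periodicity
  have hper' : ∀ (m x : ℕ), a (x + m * p) = a x := by
    intro m
    induction m with
    | zero => intro x; simp
    | succ m ih =>
      intro x
      have h1 : x + (m + 1) * p = (x + m * p) + p := by ring
      rw [h1, hper, ih]
  set u : List α := ((List.range p).map a).flatten with hu_def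
  have hL : 1 ≤ u.length := by
    by_contra h
    have hu0 : u = [] := List.eq_nil_of_length_eq_zero (by omega)
    have h0 : a 0 ∈ (List.range p).map a :=
      List.mem_map.2 ⟨0, List.mem_range.2 hp, rfl⟩
    exact hne (a 0) (ha 0) (List.flatten_eq_nil_iff.1 hu0 (a 0) h0)
  -- partial flattens of `a` are powers of `u`
  have haflat : ∀ kk, ((List.range (kk * p)).map a).flatten = lpow u kk := by
    intro kk
    induction kk with
    | zero => simp [lpow_zero]
    | succ kk ih =>
      rw [Nat.succ_mul, List.range_add, List.map_append, List.flatten_append, ih, lpow_succ']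
      congr 1
      rw [List.map_map, hu_def]
      have h2 : ∀ x ∈ List.range p, (a ∘ fun y => kk * p + y) x = a x := by
        intro x _
        show a (kk * p + x) = a x
        rw [Nat.add_comm]; exact hper' kk x
      rw [List.map_congr_left h2]
  -- partial flattens of `b` are nonempty
  have hBne : ∀ n, ((List.range (n + 1)).map b).flatten ≠ [] := by
    intro n h
    have h0 : b 0 ∈ (List.range (n + 1)).map b :=
      List.mem_map.2 ⟨0, List.mem_range.2 (Nat.succ_pos n), rfl⟩
    exact hne (b 0) (hb 0) (List.flatten_eq_nil_iff.1 h (b 0) h0)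
  have hBlen : ∀ n, 1 ≤ ((List.range (n + 1)).map b).flatten.length := by
    intro n
    rcases Nat.eq_zero_or_pos ((List.range (n + 1)).map b).flatten.length with h | h
    · exact absurd (List.eq_nil_of_length_eq_zero h) (hBne n)
    · exact h
  -- every partial flatten of `b` is a prefix of some power of `u`
  have hex : ∀ n, ∃ kk, ((List.range (n + 1)).map b).flatten <+: lpow u kk := by
    intro n
    obtain ⟨K, hK⟩ : ∃ K, ((List.range (n + 1)).map b).flatten.length = K := ⟨_, rfl⟩
    refine ⟨K, ?_⟩
    have hK1 : 1 ≤ K := by have := hBlen n; omega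
    have hKp : K * p - 1 + 1 = K * p := by
      have h3 : 1 * 1 ≤ K * p := Nat.mul_le_mul hK1 hp
      omega
    have hag := hagree (K * p - 1) n
    rw [hKp, haflat] at hag
    rcases hag with h | h
    · have hlen : ((List.range (n + 1)).map b).flatten.length ≤ (lpow u K).length := by
        rw [length_lpow, hK]
        calc K = K * 1 := (Nat.mul_one K).symm
        _ ≤ K * u.length := Nat.mul_le_mul_left K hL
      have heqq : lpow u K = ((List.range (n + 1)).map b).flatten := h.eq_of_length_le hlen
      rw [← heqq]
    · exact h
  -- minimal power, with remainder a short suffix of `u` determined by its length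
  have key : ∀ n, ∃ (kk : ℕ) (r : List α),
      ((List.range (n + 1)).map b).flatten ++ r = lpow u kk ∧
      r.length < u.length ∧ r = u.drop (u.length - r.length) := by
    intro n
    obtain ⟨kk, hspec, hmin⟩ : ∃ kk, (((List.range (n + 1)).map b).flatten <+: lpow u kk) ∧
        ∀ m < kk, ¬ ((List.range (n + 1)).map b).flatten <+: lpow u m :=
      ⟨Nat.find (hex n), Nat.find_spec (hex n), fun m hm => Nat.find_min (hex n) hm⟩
    obtain ⟨r, hBr⟩ := hspec
    refine ⟨kk, r, hBr, ?_⟩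
    have hkk1 : 1 ≤ kk := by
      rcases Nat.eq_zero_or_pos kk with h0 | h0
      · exfalso
        have : ((List.range (n + 1)).map b).flatten ++ r = [] := by rw [hBr, h0, lpow_zero]
        exact hBne n (List.append_eq_nil_iff.1 this).1
      · exact h0
    have hlensum : ((List.range (n + 1)).map b).flatten.length + r.length = kk * u.length := by
      have h4 := congrArg List.length hBr
      rw [List.length_append, length_lpow] at h4
      exact h4
    have hmul : (kk - 1) * u.length + u.length = kk * u.length := by
      have hk2 : kk - 1 + 1 = kk := by omega
      calc (kk - 1) * u.length + u.length = (kk - 1 + 1) * u.length := by rw [Nat.succ_mul]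
      _ = kk * u.length := by rw [hk2]
    have hsplit : lpow u kk = lpow u (kk - 1) ++ u := by
      rw [← lpow_succ']; congr 1; omega
    have hrlt : r.length < u.length := by
      by_contra hcon
      push_neg at hcon
      apply hmin (kk - 1) (by omega)
      have hle : ((List.range (n + 1)).map b).flatten.length ≤ (lpow u (kk - 1)).length := by
        rw [length_lpow]; omega
      refine List.prefix_of_prefix_length_le ⟨r, hBr⟩ ?_ hle
      rw [hsplit]; exact List.prefix_append _ _
    refine ⟨hrlt, ?_⟩
    obtain ⟨i0, hi0⟩ : ∃ i0, ((List.range (n + 1)).map b).flatten.length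
        - (kk - 1) * u.length = i0 := ⟨_, rfl⟩
    have hdrop : r = u.drop i0 := by
      have h5 := List.drop_length_add_append (l₁ := lpow u (kk - 1)) (l₂ := u) i0
      have h6 : (lpow u (kk - 1)).length + i0 = ((List.range (n + 1)).map b).flatten.length := by
        rw [length_lpow]; omega
      rw [h6] at h5
      rw [← h5, ← hsplit, ← hBr, List.drop_left]
    have hi0le : i0 ≤ u.length := by omega
    have hrl : r.length = u.length - i0 := by rw [hdrop, List.length_drop]
    rw [hdrop, List.length_drop]
    congr 1
    omega
  choose kf rf hkr hrlt hrdet using key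
  -- main argument for an ordered pair with equal remainders
  have hmain : ∀ i j : ℕ, i < j → t ≤ i → (rf i).length = (rf j).length → a t = b t := by
    intro i j hij hti hlen
    have hrij : rf j = rf i := by rw [hrdet j, ← hlen, ← hrdet i]
    obtain ⟨r, hr⟩ : ∃ r, rf i = r := ⟨_, rfl⟩
    obtain ⟨Bi, hBi⟩ : ∃ Bi, ((List.range (i + 1)).map b).flatten = Bi := ⟨_, rfl⟩
    obtain ⟨Q, hQ⟩ : ∃ Q, ((List.range' (i + 1) (j - i)).map b).flatten = Q := ⟨_, rfl⟩
    obtain ⟨ki, hki⟩ : ∃ ki, kf i = ki := ⟨_, rfl⟩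
    obtain ⟨kj, hkj⟩ : ∃ kj, kf j = kj := ⟨_, rfl⟩
    -- splitting the range
    have hrangeSplit : List.range (j + 1) = List.range (i + 1) ++ List.range' (i + 1) (j - i) := by
      have h7 := List.range'_append (s := 0) (m := i + 1) (n := j - i) (step := 1)
      simp only [Nat.zero_add, Nat.one_mul] at h7
      have h8 : i + 1 + (j - i) = j + 1 := by omega
      rw [h8] at h7
      rw [List.range_eq_range', List.range_eq_range', ← h7]
    have hBj : ((List.range (j + 1)).map b).flatten = Bi ++ Q := by
      rw [hrangeSplit, List.map_append, List.flatten_append, hBi, hQ]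
    have hQne : Q ≠ [] := by
      intro h
      have h9 : List.range' (i + 1) (j - i) = (i + 1) :: List.range' (i + 2) (j - i - 1) := by
        obtain ⟨m, hm⟩ : ∃ m, j - i - 1 = m := ⟨_, rfl⟩
        have h10 : j - i = m + 1 := by omega
        rw [hm, h10, List.range'_succ]
      apply hne (b (i + 1)) (hb (i + 1))
      apply List.flatten_eq_nil_iff.1 (hQ ▸ h) (b (i + 1))
      exact List.mem_map.2 ⟨i + 1, by rw [h9]; exact List.mem_cons_self, rfl⟩
    have hBine : Bi ≠ [] := hBi ▸ hBne i
    have hBiR : Bi ++ r = lpow u ki := by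
      have := hkr i; rw [hBi, hr, hki] at this; exact this
    have hBjR : (Bi ++ Q) ++ r = lpow u kj := by
      have := hkr j; rw [hBj, hrij, hr, hkj] at this; exact this
    -- ki < kj
    have hki_lt : ki < kj := by
      have h11 := congrArg List.length hBiR
      have h12 := congrArg List.length hBjR
      rw [List.length_append, length_lpow] at h11
      rw [List.length_append, List.length_append, length_lpow] at h12
      have hQl : 1 ≤ Q.length := by
        rcases Nat.eq_zero_or_pos Q.length with h | h
        · exact absurd (List.eq_nil_of_length_eq_zero h) hQne
        · exact h
      by_contra hcon
      push_neg at hcon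
      have := Nat.mul_le_mul_right u.length hcon
      omega
    obtain ⟨d, hd⟩ : ∃ d, ki + d = kj := ⟨kj - ki, by omega⟩
    have hQr : Q ++ r = r ++ lpow u d := by
      apply List.append_cancel_left (as := Bi)
      calc Bi ++ (Q ++ r) = (Bi ++ Q) ++ r := by rw [List.append_assoc]
      _ = lpow u kj := hBjR
      _ = lpow u ki ++ lpow u d := by rw [← lpow_add, hd]
      _ = (Bi ++ r) ++ lpow u d := by rw [hBiR]
      _ = Bi ++ (r ++ lpow u d) := by rw [List.append_assoc]
    have hcommQ : Q ++ (r ++ Bi) = (r ++ Bi) ++ Q := by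
      apply List.append_cancel_right (bs := r)
      calc (Q ++ (r ++ Bi)) ++ r = (Q ++ r) ++ (Bi ++ r) := by simp only [List.append_assoc]
      _ = (r ++ lpow u d) ++ lpow u ki := by rw [hQr, hBiR]
      _ = r ++ (lpow u d ++ lpow u ki) := by simp only [List.append_assoc]
      _ = r ++ lpow u (d + ki) := by rw [lpow_add]
      _ = r ++ lpow u (ki + d) := by rw [Nat.add_comm d ki]
      _ = r ++ (lpow u ki ++ lpow u d) := by rw [lpow_add]
      _ = (r ++ (Bi ++ r)) ++ lpow u d := by rw [hBiR]; simp only [List.append_assoc]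
      _ = (r ++ Bi) ++ (r ++ lpow u d) := by simp only [List.append_assoc]
      _ = (r ++ Bi) ++ (Q ++ r) := by rw [hQr]
      _ = ((r ++ Bi) ++ Q) ++ r := by simp only [List.append_assoc]
    obtain ⟨z, s, t', hQz, hrB⟩ := comm_append Q (r ++ Bi) hcommQ
    have hs1 : 1 ≤ s := by
      rcases Nat.eq_zero_or_pos s with h | h
      · exact absurd (by rw [hQz, h, lpow_zero]) hQne
      · exact h
    have ht1 : 1 ≤ t' := by
      rcases Nat.eq_zero_or_pos t' with h | h
      · exfalso
        have : r ++ Bi = [] := by rw [hrB, h, lpow_zero]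
        exact hBine (List.append_eq_nil_iff.1 this).2
      · exact h
    have hE : lpow (r ++ Bi) s = lpow Q t' := by
      rw [hQz, hrB, ← lpow_mul, ← lpow_mul, Nat.mul_comm]
    have hv : r ++ (lpow u (ki * (s - 1)) ++ Bi) = lpow Q t' := by
      rw [← hE]
      have h13 : lpow u (ki * (s - 1)) = lpow (Bi ++ r) (s - 1) := by rw [lpow_mul, hBiR]
      rw [h13]
      calc r ++ (lpow (Bi ++ r) (s - 1) ++ Bi) = (r ++ lpow (Bi ++ r) (s - 1)) ++ Bi := by
            simp only [List.append_assoc]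
      _ = (lpow (r ++ Bi) (s - 1) ++ r) ++ Bi := by rw [lpow_shift]
      _ = lpow (r ++ Bi) (s - 1) ++ (r ++ Bi) := by simp only [List.append_assoc]
      _ = lpow (r ++ Bi) ((s - 1) + 1) := (lpow_succ' _ _).symm
      _ = lpow (r ++ Bi) s := by congr 1; omega
    -- first application of the code property
    have hmem_us : ∀ w ∈ (List.range (i + 1)).map b, w ∈ A := by
      intro w hw; obtain ⟨x, _, rfl⟩ := List.mem_map.1 hw; exact hb x
    have hmem_ps : ∀ kk, ∀ w ∈ (List.range kk).map a, w ∈ A := by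
      intro kk w hw; obtain ⟨x, _, rfl⟩ := List.mem_map.1 hw; exact ha x
    have hmem_qs : ∀ w ∈ (List.replicate t' ((List.range' (i + 1) (j - i)).map b)).flatten,
        w ∈ A := by
      intro w hw
      obtain ⟨l, hl, hwl⟩ := List.mem_flatten.1 hw
      rw [List.eq_of_mem_replicate hl] at hwl
      obtain ⟨x, _, rfl⟩ := List.mem_map.1 hwl; exact hb x
    have hflat_eq :
        ((List.range (ki * p)).map a ++ ((List.range ((ki * (s - 1)) * p)).map a
          ++ (List.range (i + 1)).map b)).flatten =
        ((List.range (i + 1)).map b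
          ++ (List.replicate t' ((List.range' (i + 1) (j - i)).map b)).flatten).flatten := by
      rw [List.flatten_append, List.flatten_append, List.flatten_append,
        haflat, haflat, flatten_replicate_flatten, hBi, hQ]
      calc lpow u ki ++ (lpow u (ki * (s - 1)) ++ Bi)
          = (Bi ++ r) ++ (lpow u (ki * (s - 1)) ++ Bi) := by rw [hBiR]
      _ = Bi ++ (r ++ (lpow u (ki * (s - 1)) ++ Bi)) := by simp only [List.append_assoc]
      _ = Bi ++ lpow Q t' := by rw [hv]
    have heq1 : (List.range (ki * p)).map a ++ ((List.range ((ki * (s - 1)) * p)).map a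
          ++ (List.range (i + 1)).map b) =
        (List.range (i + 1)).map b
          ++ (List.replicate t' ((List.range' (i + 1) (j - i)).map b)).flatten := by
      apply hcode _ _ ?_ ?_ hflat_eq
      · intro w hw
        rcases List.mem_append.1 hw with h | h
        · exact hmem_ps _ w h
        · rcases List.mem_append.1 h with h | h
          · exact hmem_ps _ w h
          · exact hmem_us w h
      · intro w hw
        rcases List.mem_append.1 hw with h | h
        · exact hmem_us w h
        · exact hmem_qs w h
    -- the remainder is a concatenation of code words
    obtain ⟨rs, hrs_flat, hrs_mem⟩ : ∃ rs : List (List α),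
        r = rs.flatten ∧ ∀ w ∈ rs, w ∈ A := by
      rcases List.append_eq_append_iff.1 heq1 with ⟨a', ha1, ha2⟩ | ⟨c', hc1, hc2⟩
      · -- us = ps ++ a' : forces r = []
        refine ⟨[], ?_, by intro w hw; cases hw⟩
        have h14 := congrArg (fun l => (List.flatten l).length) ha1
        simp only [List.flatten_append] at h14
        rw [hBi, haflat, List.length_append] at h14
        have h15 := congrArg List.length hBiR
        rw [List.length_append] at h15
        have : r.length = 0 := by omega
        rw [List.eq_nil_of_length_eq_zero this, List.flatten_nil]
      · -- ps = us ++ c' : r = c'.flatten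
        refine ⟨c', ?_, ?_⟩
        · have h16 := congrArg List.flatten hc1
          rw [List.flatten_append, haflat, hBi, ← hBiR] at h16
          exact List.append_cancel_left h16
        · intro w hw
          have : w ∈ (List.range (ki * p)).map a := by rw [hc1]; exact List.mem_append_right _ hw
          exact hmem_ps _ w this
    -- second application of the code property
    have heq2 : (List.range (i + 1)).map b ++ rs = (List.range (ki * p)).map a := by
      apply hcode _ _ ?_ (hmem_ps _) ?_
      · intro w hw
        rcases List.mem_append.1 hw with h | h
        · exact hmem_us w h
        · exact hrs_mem w h
      · rw [List.flatten_append, haflat, hBi, ← hrs_flat, hBiR]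
    -- extract the t-th entry
    have htus : t < ((List.range (i + 1)).map b).length := by
      rw [List.length_map, List.length_range]; omega
    have htfull : t < ((List.range (i + 1)).map b ++ rs).length := by
      rw [List.length_append]; omega
    have h17 := List.getElem_of_eq heq2 htfull
    rw [List.getElem_append_left htus] at h17
    have htps : t < (List.range (ki * p)).length := by
      have h18 := congrArg List.length heq2
      rw [List.length_append, List.length_map, List.length_range, List.length_map,
        List.length_range] at h18
      rw [List.length_range]
      omega
    simp only [List.getElem_map, List.getElem_range] at h17
    exact h17.symm
  -- pigeonhole on remainder lengths in [t, t + |u|]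
  obtain ⟨i, hi, j, hj, hij, hfij⟩ :=
    Finset.exists_ne_map_eq_of_card_lt_of_maps_to
      (s := Finset.Icc t (t + u.length)) (t := Finset.range u.length)
      (by rw [Nat.card_Icc, Finset.card_range]; omega)
      (f := fun n => (rf n).length)
      (fun n _ => Finset.mem_range.2 (hrlt n))
  rcases hij.lt_or_gt with hlt | hlt
  · exact hmain i j hlt (Finset.mem_Icc.1 hi).1 hfij
  · exact hmain j i hlt (Finset.mem_Icc.1 hj).1 hfij.symm
end

section
/- Let α be a type and let A be a finite set of nonempty lists over α that is a code: any two finite factorizations of the same list into elements of A coincide. Then there exists an integer M ≥ 1, depending only on A, such that for every function x : ℕ → α the set of sequences a : ℕ → A whose infinite concatenation equals x has cardinality at most M. -/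
/-- The infinite concatenation of the sequence of words `a` equals the infinite word `x`:
for every position `n` some partial concatenation is long enough and has entry `x n`
at position `n`. -/
def InfiniteConcatEq {α : Type*} (a : ℕ → List α) (x : ℕ → α) : Prop :=
  ∀ n : ℕ, ∃ T : ℕ, (((List.range T).map a).flatten)[n]? = some (x n)

namespace FCBFAux

variable {α : Type*}

/-- Length of the concatenation of the first `T` words. -/
def cut (a : ℕ → List α) (T : ℕ) : ℕ := (((List.range T).map a).flatten).length

lemma prefix_mono (a : ℕ → List α) {T T' : ℕ} (h : T ≤ T') :
    ((List.range T).map a).flatten <+: ((List.range T').map a).flatten := by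
  obtain ⟨k, rfl⟩ := Nat.exists_eq_add_of_le h
  rw [List.range_add, List.map_append, List.flatten_append]
  exact ⟨_, rfl⟩

lemma cut_mono (a : ℕ → List α) {T T' : ℕ} (h : T ≤ T') : cut a T ≤ cut a T' :=
  (prefix_mono a h).length_le

lemma cut_succ (a : ℕ → List α) (T : ℕ) : cut a (T + 1) = cut a T + (a T).length := by
  simp [cut, List.range_succ]

lemma getx {a : ℕ → List α} {x : ℕ → α} (hx : InfiniteConcatEq a x) {n T : ℕ}
    (hn : n < cut a T) :
    (((List.range T).map a).flatten)[n]? = some (x n) := by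
  obtain ⟨T', hT'⟩ := hx n
  rcases le_total T T' with h | h
  · obtain ⟨r, hr⟩ := prefix_mono a h
    rw [← hT', ← hr, List.getElem?_append_left hn]
  · obtain ⟨r, hr⟩ := prefix_mono a h
    have hn' : n < (((List.range T').map a).flatten).length :=
      List.getElem?_eq_some_iff.mp hT' |>.1
    rw [← hr, List.getElem?_append_left hn', hT']

lemma flatten_eq {a : ℕ → List α} {x : ℕ → α} (hx : InfiniteConcatEq a x) (T : ℕ) :
    ((List.range T).map a).flatten = (List.range (cut a T)).map x := by
  apply List.ext_getElem?
  intro n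
  rcases lt_or_ge n (cut a T) with h | h
  · simp [getx hx h, List.getElem?_range h]
  · rw [List.getElem?_eq_none h, List.getElem?_eq_none (by simpa using h)]

end FCBFAux

open FCBFAux in
/-- For a finite code `A` of nonempty words there is a uniform bound `M ≥ 1` on the
number of `A`-factorizations of any infinite word. -/
theorem finite_code_bounded_fibers {α : Type*} (A : Set (List α)) (hfin : A.Finite)
    (hne : ∀ w ∈ A, w ≠ [])
    (hcode : ∀ us vs : List (List α), (∀ u ∈ us, u ∈ A) → (∀ v ∈ vs, v ∈ A) →
      us.flatten = vs.flatten → us = vs) :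
    ∃ M : ℕ, 1 ≤ M ∧ ∀ x : ℕ → α,
      {a : ℕ → List α | (∀ t, a t ∈ A) ∧ InfiniteConcatEq a x}.Finite ∧
      {a : ℕ → List α | (∀ t, a t ∈ A) ∧ InfiniteConcatEq a x}.ncard ≤ M := by
  classical
  set L : ℕ := hfin.toFinset.sup List.length with hLdef
  set M : ℕ := max L 1 with hMdef
  refine ⟨M, le_max_right _ _, fun x => ?_⟩
  set S := {a : ℕ → List α | (∀ t, a t ∈ A) ∧ InfiniteConcatEq a x} with hSdef
  -- basic facts for factorizations
  have hlen : ∀ a ∈ S, ∀ T, 1 ≤ (a T).length ∧ (a T).length ≤ L := by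
    intro a ha T
    constructor
    · have := hne _ (ha.1 T)
      exact Nat.one_le_iff_ne_zero.mpr (by simpa using this)
    · exact Finset.le_sup (hfin.mem_toFinset.mpr (ha.1 T))
  -- the code property transfers to cut points
  have agree : ∀ a ∈ S, ∀ b ∈ S, ∀ m n : ℕ, cut a m = cut b n →
      (List.range m).map a = (List.range n).map b := by
    intro a ha b hb m n h
    apply hcode
    · intro u hu
      obtain ⟨i, -, rfl⟩ := List.mem_map.mp hu
      exact ha.1 i
    · intro v hv
      obtain ⟨i, -, rfl⟩ := List.mem_map.mp hv
      exact hb.1 i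
    · rw [flatten_eq ha.2, flatten_eq hb.2, h]
  have agree' : ∀ a ∈ S, ∀ b ∈ S, ∀ m n : ℕ, cut a m = cut b n →
      m = n ∧ ∀ i < m, a i = b i := by
    intro a ha b hb m n h
    have h2 := agree a ha b hb m n h
    have hmn : m = n := by
      have := congrArg List.length h2
      simpa using this
    subst hmn
    refine ⟨rfl, fun i hi => ?_⟩
    have := congrArg (fun l => l[i]?) h2
    simpa [List.getElem?_map, List.getElem?_range hi] using this
  -- key cardinality bound on finite subsets
  have key : ∀ t : Finset (ℕ → List α), ↑t ⊆ S → t.card ≤ M := by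
    intro t ht
    by_contra hcon
    push_neg at hcon
    obtain ⟨s, hst, hcard⟩ := Finset.exists_subset_card_eq hcon
    set f : Fin (M + 1) → (ℕ → List α) := fun i => (s.equivFin.symm (Fin.cast hcard.symm i)).1
      with hfdef
    have hfinj : Function.Injective f := by
      intro i j hij
      have h1 : s.equivFin.symm (Fin.cast hcard.symm i) = s.equivFin.symm (Fin.cast hcard.symm j) :=
        Subtype.ext hij
      simpa [Fin.ext_iff] using s.equivFin.symm.injective h1
    have hfS : ∀ i, f i ∈ S := fun i => ht (hst (s.equivFin.symm (Fin.cast hcard.symm i)).2)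
    -- divergence bounds
    have hBex : ∀ i j : Fin (M + 1), ∃ B : ℕ, i ≠ j →
        ∀ m n : ℕ, cut (f i) m = cut (f j) n → cut (f i) m ≤ B := by
      intro i j
      by_cases hij : i = j
      · exact ⟨0, fun h => absurd hij h⟩
      · have hfij : f i ≠ f j := fun h => hij (hfinj h)
        have hd : ∃ d, f i d ≠ f j d := Function.ne_iff.mp hfij
        refine ⟨cut (f i) (Nat.find hd), fun _ m n h => ?_⟩
        have h2 := agree' _ (hfS i) _ (hfS j) m n h
        have hmd : m ≤ Nat.find hd := by
          by_contra hmd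
          push_neg at hmd
          exact Nat.find_spec hd (h2.2 _ hmd)
        exact cut_mono _ hmd
    choose B hB using hBex
    set N : ℕ := Finset.univ.sup (fun p : Fin (M + 1) × Fin (M + 1) => B p.1 p.2) with hNdef
    -- each factorization has a cut point in (N, N+M]
    have hgrow : ∀ i : Fin (M + 1), ∃ T, N < cut (f i) T := by
      intro i
      refine ⟨N + 1, ?_⟩
      have : ∀ T, T ≤ cut (f i) T := by
        intro T
        induction T with
        | zero => simp [cut]
        | succ T ih =>
          rw [cut_succ]
          have := (hlen _ (hfS i) T).1
          omega
      have := this (N + 1)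
      omega
    set c : Fin (M + 1) → ℕ := fun i => cut (f i) (Nat.find (hgrow i)) with hcdef
    have hcN : ∀ i, N < c i := fun i => Nat.find_spec (hgrow i)
    have hcNL : ∀ i, c i ≤ N + M := by
      intro i
      have hT0 : Nat.find (hgrow i) ≠ 0 := by
        intro h0
        have := Nat.find_spec (hgrow i)
        rw [h0] at this
        simp [cut] at this
      obtain ⟨T, hT⟩ := Nat.exists_eq_succ_of_ne_zero hT0
      have hmin : ¬ N < cut (f i) T := Nat.find_min (hgrow i) (by omega)
      have hstep : cut (f i) (T + 1) = cut (f i) T + (f i T).length := cut_succ _ _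
      have hlenT := (hlen _ (hfS i) T).2
      have hLM : L ≤ M := le_max_left _ _
      simp only [hcdef, hT, Nat.succ_eq_add_one]
      omega
    have hcinj : Function.Injective c := by
      intro i j hij
      by_contra hne'
      have := hB i j hne' _ _ hij
      have hBN : B i j ≤ N := by
        rw [hNdef]
        exact Finset.le_sup (f := fun p : Fin (M + 1) × Fin (M + 1) => B p.1 p.2)
          (Finset.mem_univ (i, j))
      have := hcN i
      simp only [hcdef] at this hij
      omega
    -- pigeonhole
    have hpig : (Finset.univ : Finset (Fin (M + 1))).card ≤ (Finset.Ioc N (N + M)).card := by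
      apply Finset.card_le_card_of_injOn c
      · intro i _
        exact Finset.mem_Ioc.mpr ⟨hcN i, hcNL i⟩
      · exact hcinj.injOn
    simp [Nat.card_Ioc] at hpig
  -- conclude
  have hSfin : S.Finite := by
    by_contra hinf
    have hinf' : S.Infinite := by rwa [← Set.not_infinite, not_not] at hinf
    obtain ⟨t, hts, htfin, htcard⟩ := hinf'.exists_subset_ncard_eq (M + 1)
    have := key htfin.toFinset (by rw [Set.Finite.coe_toFinset]; exact hts)
    rw [← Set.ncard_eq_toFinset_card t htfin] at this
    omega
  refine ⟨hSfin, ?_⟩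
  rw [Set.ncard_eq_toFinset_card S hSfin]
  exact key _ (by rw [Set.Finite.coe_toFinset])
end
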